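/- arXiv:0908.4034 — 2 statements merged into one kernel-verified Lean document; each statement's English description precedes it below -/
import Mathlib

section
/- The Fibonacci word is not automatic: for every integer g ≥ 2, the Fibonacci word w : ℕ → {0,1} is not g-automatic. -/
open scoped Classical

/-- The golden ratio `Φ = (1 + √5)/2`. -/
noncomputable def Φ : ℝ := (1 + Real.sqrt 5) / 2

/-- The Fibonacci word `w : ℕ → {0,1}`: `w n = 0` iff `n + 1 = ⌊kΦ⌋` for some `k ≥ 1`
(the fixed point `abaababa…` of `a ↦ ab`, `b ↦ a`, with `a` encoded as `0` and `b` as `1`). -/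
noncomputable def fibWord (n : ℕ) : Fin 2 :=
  if ∃ k : ℕ, 1 ≤ k ∧ ((n : ℤ) + 1) = ⌊(k : ℝ) * Φ⌋ then 0 else 1

/-- A sequence `u : ℕ → A` is `g`-automatic if there are a finite set `Q` of states, an initial
state `q₀`, a transition map `δ : Q → {0,…,g−1} → Q` and an output map `φ : Q → A` such that
`u n = φ (q_n)`, where `q_n` is obtained from `q₀` by applying `δ` successively to the base-`g`
digits of `n`, read from the most significant digit to the least significant digit. -/
def IsGAutomatic {A : Type*} (g : ℕ) (u : ℕ → A) : Prop :=
  ∃ (Q : Type) (_ : Fintype Q) (q₀ : Q) (δ : Q → Fin g → Q) (φ : Q → A),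
    ∀ n : ℕ, u n = φ ((Nat.digits g n).reverse.foldl
      (fun q d => if h : d < g then δ q ⟨d, h⟩ else q) q₀)

lemma sqrt5_sq : Real.sqrt 5 * Real.sqrt 5 = 5 := Real.mul_self_sqrt (by norm_num)
lemma sqrt5_gt : 2 < Real.sqrt 5 := by nlinarith [sqrt5_sq, Real.sqrt_nonneg 5]
lemma sqrt5_lt : Real.sqrt 5 < 3 := by nlinarith [sqrt5_sq, Real.sqrt_nonneg 5]
lemma phi_gt : 3/2 < Φ := by unfold Φ; linarith [sqrt5_gt]
lemma phi_lt : Φ < 2 := by unfold Φ; linarith [sqrt5_lt]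
lemma phi_sq : Φ * Φ = Φ + 1 := by unfold Φ; nlinarith [sqrt5_sq]

lemma phi_irr : Irrational Φ := by
  have h5 : Irrational (Real.sqrt 5) := (by norm_num : Nat.Prime 5).irrational_sqrt
  have h1 : Irrational ((1:ℚ) + Real.sqrt 5) := h5.ratCast_add 1
  have := h1.div_ratCast (q := 2) (by norm_num)
  unfold Φ; simpa using this

lemma nat_mul_phi_irr {m : ℕ} (hm : m ≠ 0) : Irrational ((m : ℝ) * Φ) :=
  phi_irr.natCast_mul hm

/-- Beatty characterization. -/
lemma fibWord_eq_one_iff (N : ℕ) :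
    fibWord N = 1 ↔ Int.fract (((N : ℝ) + 1) * Φ) < 2 - Φ := by
  set m : ℝ := (N : ℝ) + 1 with hm
  have hm1 : (1:ℝ) ≤ m := by rw [hm]; have := (Nat.cast_nonneg N : (0:ℝ) ≤ N); linarith
  have hFne : Int.fract (m * Φ) ≠ 2 - Φ := by
    intro h
    have : ((N:ℝ) + 2) * Φ = (⌊m * Φ⌋ : ℝ) + 2 := by
      have h' := Int.fract_add_floor (m * Φ)
      rw [h] at h'
      have he : ((N:ℝ) + 2) * Φ = m * Φ + Φ := by rw [hm]; ring
      linarith [h', he]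
    have hirr : Irrational (((N + 2 : ℕ) : ℝ) * Φ) := nat_mul_phi_irr (by omega)
    apply hirr.ne_int (⌊m * Φ⌋ + 2)
    push_cast
    push_cast at this
    linarith [this]
  have keyP : (∃ k : ℕ, 1 ≤ k ∧ ((N : ℤ) + 1) = ⌊(k : ℝ) * Φ⌋) ↔
      2 - Φ < Int.fract (m * Φ) := by
    constructor
    · rintro ⟨k, hk1, hk⟩
      have hkR : (k:ℝ) ≥ 1 := by exact_mod_cast hk1
      -- m ≤ kΦ < m + 1
      have h1 : m ≤ (k:ℝ) * Φ := by
        have := Int.floor_le ((k:ℝ) * Φ)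
        rw [← hk] at this; push_cast at this; linarith
      have h2 : (k:ℝ) * Φ < m + 1 := by
        have := Int.lt_floor_add_one ((k:ℝ) * Φ)
        rw [← hk] at this; push_cast at this; linarith
      have h1' : m < (k:ℝ) * Φ := by
        rcases lt_or_eq_of_le h1 with h | h
        · exact h
        · exfalso
          exact (nat_mul_phi_irr (by omega : k ≠ 0)).ne_int ((N:ℤ)+1) (by push_cast; linarith)
      -- multiply by Φ - 1 (Φ(Φ-1) = 1)
      have hphi1 : 0 < Φ - 1 := by linarith [phi_gt]
      have e1 : m * (Φ - 1) < (k:ℝ) := by nlinarith [phi_sq]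
      have e2 : (k:ℝ) < (m + 1) * (Φ - 1) := by nlinarith [phi_sq]
      have hfl : (⌊m * (Φ - 1)⌋ : ℝ) + 1 ≤ (k:ℝ) := by
        have : ⌊m * (Φ - 1)⌋ < (k:ℤ) := Int.floor_lt.mpr (by push_cast; linarith)
        exact_mod_cast this
      have hfr : Int.fract (m * (Φ - 1)) = Int.fract (m * Φ) := by
        rw [show m * (Φ - 1) = m * Φ - (((N:ℤ) + 1 : ℤ) : ℝ) from by push_cast [hm]; ring,
          Int.fract_sub_intCast]
      have := Int.fract_add_floor (m * (Φ - 1))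
      rw [hfr] at this
      nlinarith [this]
    · intro hF
      set K : ℤ := ⌊m * (Φ - 1)⌋ + 1 with hK
      have hfr : Int.fract (m * (Φ - 1)) = Int.fract (m * Φ) := by
        rw [show m * (Φ - 1) = m * Φ - (((N:ℤ) + 1 : ℤ) : ℝ) from by push_cast [hm]; ring,
          Int.fract_sub_intCast]
      have hKr : (K:ℝ) = m * (Φ - 1) - Int.fract (m * Φ) + 1 := by
        rw [hK, ← hfr]
        have := Int.fract_add_floor (m * (Φ - 1))
        push_cast
        linarith [this]
      have hFlt : Int.fract (m * Φ) < 1 := Int.fract_lt_one _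
      have hKΦ : (K:ℝ) * Φ = m + Φ * (1 - Int.fract (m * Φ)) := by
        rw [hKr]; nlinarith [phi_sq]
      have h1 : m < (K:ℝ) * Φ := by
        rw [hKΦ]; nlinarith [phi_gt, hFlt]
      have h2 : (K:ℝ) * Φ < m + 1 := by
        rw [hKΦ]
        have hΦpos : (0:ℝ) < Φ := by linarith [phi_gt]
        have := mul_lt_mul_of_pos_left (show 1 - Int.fract (m*Φ) < Φ - 1 by linarith) hΦpos
        nlinarith [phi_sq]
      have hK1 : 1 ≤ K := by
        rw [hK]
        have : (0:ℤ) ≤ ⌊m * (Φ - 1)⌋ := Int.floor_nonneg.mpr (by nlinarith [phi_gt])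
        omega
      refine ⟨K.toNat, by omega, ?_⟩
      have hcast : ((K.toNat : ℕ) : ℝ) = (K : ℝ) := by
        have h' : (K.toNat : ℤ) = K := Int.toNat_of_nonneg (by omega)
        exact_mod_cast h'
      rw [hcast]
      have : ⌊(K:ℝ) * Φ⌋ = (N:ℤ) + 1 := by
        apply Int.floor_eq_iff.mpr
        constructor
        · push_cast; linarith
        · push_cast; linarith
      exact this.symm
  rw [fibWord]
  by_cases hP : ∃ k : ℕ, 1 ≤ k ∧ ((N : ℤ) + 1) = ⌊(k : ℝ) * Φ⌋
  · simp only [hP, if_true]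
    constructor
    · intro h; exact absurd h (by decide)
    · intro h
      exfalso
      have := keyP.mp hP
      linarith
  · simp only [hP, if_false]
    have h2 := keyP.not.mp hP
    push_neg at h2
    simp only [true_iff]
    exact lt_of_le_of_ne h2 hFne

/-- Small steps pass through every window. -/
lemma fract_step (γ x δ : ℝ) (hγ0 : 0 < γ) (hγδ : γ < δ) (hx : 0 < x) (hxδ : x + δ < 1) :
    ∃ j : ℕ, 1 ≤ j ∧ x < Int.fract ((j:ℝ) * γ) ∧ Int.fract ((j:ℝ) * γ) < x + δ := by
  set J : ℤ := ⌊(x + 1) / γ⌋ + 1 with hJ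
  have hpos : 0 < (x + 1) / γ := by positivity
  have hJ1 : 1 ≤ J := by
    have : (0:ℤ) ≤ ⌊(x + 1) / γ⌋ := Int.floor_nonneg.mpr hpos.le
    omega
  have hlow : x + 1 < (J:ℝ) * γ := by
    have h1 : (x + 1) / γ < (J:ℝ) := by
      rw [hJ]; push_cast; linarith [Int.lt_floor_add_one ((x + 1) / γ)]
    exact (div_lt_iff₀ hγ0).mp h1
  have hhigh : (J:ℝ) * γ < x + 1 + δ := by
    have h1 : (J:ℝ) ≤ (x + 1) / γ + 1 := by
      rw [hJ]; push_cast; linarith [Int.floor_le ((x + 1) / γ)]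
    have h2 : (J:ℝ) * γ ≤ ((x + 1) / γ + 1) * γ := mul_le_mul_of_nonneg_right h1 hγ0.le
    have h3 : ((x + 1) / γ + 1) * γ = x + 1 + γ := by field_simp
    linarith
  have hfr : Int.fract ((J:ℝ) * γ) = (J:ℝ) * γ - 1 := by
    have e : Int.fract ((J:ℝ) * γ) = Int.fract ((J:ℝ) * γ - ((1:ℤ):ℝ)) :=
      (Int.fract_sub_intCast _ _).symm
    rw [e, Int.fract_eq_self.mpr ⟨by push_cast; linarith, by push_cast; linarith⟩]
    push_cast; ring
  refine ⟨J.toNat, by omega, ?_, ?_⟩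
  · have hc : ((J.toNat : ℕ) : ℝ) = (J : ℝ) := by exact_mod_cast Int.toNat_of_nonneg (by omega)
    rw [hc, hfr]; linarith
  · have hc : ((J.toNat : ℕ) : ℝ) = (J : ℝ) := by exact_mod_cast Int.toNat_of_nonneg (by omega)
    rw [hc, hfr]; linarith

/-- Density of `{fract (n α)}` for irrational `α`, with `n ≥ 1` natural. -/
lemma dense_fract (α : ℝ) (hα : Irrational α) (x δ : ℝ) (hδ : 0 < δ) (hx : 0 < x)
    (hxδ : x + δ < 1) :
    ∃ n : ℕ, 1 ≤ n ∧ x < Int.fract ((n:ℝ) * α) ∧ Int.fract ((n:ℝ) * α) < x + δ := by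
  -- pigeonhole: find m ≥ 1 with fract (m α) ∈ (0,δ) ∪ (1-δ,1)
  obtain ⟨N, hN⟩ := exists_nat_gt (1 / δ)
  have hN0 : 0 < N := by
    by_contra h
    push_neg at h
    interval_cases N
    simp at hN
    linarith [one_div_pos.mpr hδ]
  have hNR : (0:ℝ) < N := by exact_mod_cast hN0
  have hinv : 1 / (N:ℝ) < δ := by
    rw [div_lt_iff₀ hNR]
    rw [div_lt_iff₀ hδ] at hN
    nlinarith
  -- bucket map
  have hbucket : ∀ k : ℕ, (⌊(N:ℝ) * Int.fract ((k:ℝ) * α)⌋).toNat < N := by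
    intro k
    have h1 : (N:ℝ) * Int.fract ((k:ℝ) * α) < N := by
      have := Int.fract_lt_one ((k:ℝ) * α)
      nlinarith
    have h2 : ⌊(N:ℝ) * Int.fract ((k:ℝ) * α)⌋ < (N:ℤ) := Int.floor_lt.mpr (by exact_mod_cast h1)
    omega
  set f : Fin (N + 1) → Fin N := fun k => ⟨_, hbucket (k : ℕ)⟩ with hf
  obtain ⟨a, b, hab, hfab⟩ := Fintype.exists_ne_map_eq_of_card_lt f (by simp)
  -- wlog a < b as naturals
  have key : ∀ k₁ k₂ : ℕ, k₁ < k₂ →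
      (⌊(N:ℝ) * Int.fract ((k₁:ℝ) * α)⌋).toNat = (⌊(N:ℝ) * Int.fract ((k₂:ℝ) * α)⌋).toNat →
      ∃ m : ℕ, 1 ≤ m ∧ Int.fract ((m:ℝ) * α) ≠ 0 ∧
        (Int.fract ((m:ℝ) * α) < δ ∨ 1 - δ < Int.fract ((m:ℝ) * α)) := by
    intro k₁ k₂ hlt heq
    set F₁ := Int.fract ((k₁:ℝ) * α) with hF1
    set F₂ := Int.fract ((k₂:ℝ) * α) with hF2
    have hfl : ⌊(N:ℝ) * F₁⌋ = ⌊(N:ℝ) * F₂⌋ := by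
      have n1 : (0:ℤ) ≤ ⌊(N:ℝ) * F₁⌋ :=
        Int.floor_nonneg.mpr (mul_nonneg hNR.le (by rw [hF1]; exact Int.fract_nonneg _))
      have n2 : (0:ℤ) ≤ ⌊(N:ℝ) * F₂⌋ :=
        Int.floor_nonneg.mpr (mul_nonneg hNR.le (by rw [hF2]; exact Int.fract_nonneg _))
      omega
    have l1 := Int.floor_le ((N:ℝ) * F₁)
    have l2 := Int.lt_floor_add_one ((N:ℝ) * F₁)
    have l3 := Int.floor_le ((N:ℝ) * F₂)
    have l4 := Int.lt_floor_add_one ((N:ℝ) * F₂)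
    rw [hfl] at l1 l2
    have hd1 : F₂ - F₁ < 1 / N := by rw [lt_div_iff₀ hNR]; nlinarith
    have hd2 : F₁ - F₂ < 1 / N := by rw [lt_div_iff₀ hNR]; nlinarith
    set m : ℕ := k₂ - k₁ with hm
    have hm1 : 1 ≤ m := by omega
    have hmc : (m:ℝ) = (k₂:ℝ) - (k₁:ℝ) := by
      rw [hm]; push_cast [Nat.cast_sub hlt.le]; ring
    have hirr : Irrational ((m:ℝ) * α) := hα.natCast_mul (by omega)
    have hne : Int.fract ((m:ℝ) * α) ≠ 0 := by
      intro h
      have : (m:ℝ) * α = (⌊(m:ℝ) * α⌋ : ℝ) := by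
        have := Int.fract_add_floor ((m:ℝ) * α); rw [h] at this; linarith
      exact hirr.ne_int _ this
    have hfd : Int.fract ((m:ℝ) * α) = Int.fract (F₂ - F₁) := by
      have e : (m:ℝ) * α = (F₂ - F₁) + ((⌊(k₂:ℝ) * α⌋ - ⌊(k₁:ℝ) * α⌋ : ℤ) : ℝ) := by
        have e1 := Int.fract_add_floor ((k₁:ℝ) * α)
        have e2 := Int.fract_add_floor ((k₂:ℝ) * α)
        rw [hmc]; push_cast; rw [hF1, hF2]; linarith [e1, e2]
      rw [e, Int.fract_add_intCast]
    refine ⟨m, hm1, hne, ?_⟩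
    rcases lt_trichotomy (F₂ - F₁) 0 with h | h | h
    · right
      have h1N : 1 / (N:ℝ) ≤ 1 := by
        rw [div_le_one hNR]; exact_mod_cast hN0
      have hfl2 : ⌊F₂ - F₁⌋ = -1 := by
        apply Int.floor_eq_iff.mpr
        constructor
        · push_cast; linarith
        · push_cast; linarith
      have : Int.fract (F₂ - F₁) = (F₂ - F₁) + 1 := by
        rw [Int.fract, hfl2]; push_cast; ring
      rw [hfd, this]; linarith
    · exfalso; apply hne; rw [hfd, h]; simp
    · left
      have : Int.fract (F₂ - F₁) = F₂ - F₁ := by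
        apply Int.fract_eq_self.mpr
        exact ⟨h.le, by linarith⟩
      rw [hfd, this]; linarith
  have hmain : ∃ m : ℕ, 1 ≤ m ∧ Int.fract ((m:ℝ) * α) ≠ 0 ∧
      (Int.fract ((m:ℝ) * α) < δ ∨ 1 - δ < Int.fract ((m:ℝ) * α)) := by
    rcases lt_trichotomy (a : ℕ) (b : ℕ) with h | h | h
    · exact key a b h (by have := congrArg Fin.val hfab; simpa [hf] using this)
    · exact absurd (Fin.ext h) hab
    · exact key b a h (by have := congrArg Fin.val hfab; simpa [hf] using this.symm)
  obtain ⟨m, hm1, hne, hcase⟩ := hmain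
  set γ := Int.fract ((m:ℝ) * α) with hγ
  have hγ0 : 0 < γ := lt_of_le_of_ne (Int.fract_nonneg _) (Ne.symm hne)
  have hγ1 : γ < 1 := Int.fract_lt_one _
  -- fract (j m α) = fract (j γ)
  have hjm : ∀ j : ℕ, Int.fract (((j * m : ℕ):ℝ) * α) = Int.fract ((j:ℝ) * γ) := by
    intro j
    have h := Int.fract_add_floor ((m:ℝ) * α)
    have e : ((j * m : ℕ):ℝ) * α = (j:ℝ) * γ + (((j:ℤ) * ⌊(m:ℝ) * α⌋ : ℤ) : ℝ) := by
      push_cast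
      rw [hγ]
      linear_combination (-(j:ℝ)) * h
    rw [e, Int.fract_add_intCast]
  rcases hcase with h | h
  · obtain ⟨j, hj1, hj2, hj3⟩ := fract_step γ x δ hγ0 h hx hxδ
    exact ⟨j * m, by simpa using Nat.mul_le_mul hj1 hm1, by rw [hjm j]; exact hj2, by rw [hjm j]; exact hj3⟩
  · set γ' := 1 - γ with hγ'
    have hγ'0 : 0 < γ' := by rw [hγ']; linarith
    have hγ'δ : γ' < δ := by rw [hγ']; linarith
    obtain ⟨j, hj1, hj2, hj3⟩ := fract_step γ' (1 - x - δ) δ hγ'0 hγ'δ (by linarith) (by linarith)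
    have hfr : Int.fract ((j:ℝ) * γ) = 1 - Int.fract ((j:ℝ) * γ') := by
      have e : (j:ℝ) * γ = -((j:ℝ) * γ') + ((j : ℤ) : ℝ) := by rw [hγ']; push_cast; ring
      rw [e, Int.fract_add_intCast, Int.fract_neg]
      intro h0
      rw [h0] at hj2
      linarith
    refine ⟨j * m, by simpa using Nat.mul_le_mul hj1 hm1, ?_, ?_⟩
    · rw [hjm j, hfr]; linarith
    · rw [hjm j, hfr]; linarith

section Automaton

variable {Q : Type} (g : ℕ) (δ : Q → Fin g → Q) (q₀ : Q)

/-- One transition step, reading a digit. -/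
def autoStep : Q → ℕ → Q := fun q d => if h : d < g then δ q ⟨d, h⟩ else q

/-- The state reached after reading the base-`g` digits of `n`, MSB first. -/
def autoState (n : ℕ) : Q := (Nat.digits g n).reverse.foldl (autoStep g δ) q₀

lemma autoState_mul (hg : 2 ≤ g) (n : ℕ) (hn : 1 ≤ n) :
    autoState g δ q₀ (g * n) = autoStep g δ (autoState g δ q₀ n) 0 := by
  have hd : Nat.digits g (g * n) = 0 :: Nat.digits g n := by
    rw [Nat.digits_def' (by omega : 1 < g) (Nat.mul_pos (by omega) hn)]
    rw [Nat.mul_mod_right, Nat.mul_div_cancel_left n (by omega)]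
  unfold autoState
  rw [hd, List.reverse_cons, List.foldl_append]
  rfl

lemma autoState_pow (hg : 2 ≤ g) (m n : ℕ) (hn : 1 ≤ n) :
    autoState g δ q₀ (g ^ m * n) = (fun q => autoStep g δ q 0)^[m] (autoState g δ q₀ n) := by
  induction m generalizing n with
  | zero => simp
  | succ m ih =>
    have h1 : g ^ (m + 1) * n = g ^ m * (g * n) := by ring
    rw [h1, ih (g * n) (by nlinarith), autoState_mul g δ q₀ hg n hn,
      Function.iterate_succ_apply]

end Automaton


set_option maxHeartbeats 1600000 in
/-- The Fibonacci word is not automatic: for every integer `g ≥ 2` it is not `g`-automatic. -/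
theorem stmt_10 : ∀ g : ℕ, 2 ≤ g → ¬ IsGAutomatic g fibWord := by
  intro g hg h
  obtain ⟨Q, fQ, q₀, δ, φ, hspec⟩ := h
  have hout : ∀ n : ℕ, fibWord n = φ (autoState g δ q₀ n) := hspec
  -- pigeonhole on iterates of reading the digit 0
  obtain ⟨i, i', hii, hee⟩ :=
    Finite.exists_ne_map_eq_of_infinite (fun m : ℕ => ((fun q => autoStep g δ q 0)^[m] : Q → Q))
  -- wlog i < i'
  have main : ∀ i i' : ℕ, i < i' →
      ((fun q => autoStep g δ q 0)^[i] : Q → Q) = (fun q => autoStep g δ q 0)^[i'] → False := by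
    clear hii hee i i'
    intro i i' hlt hee
    set a : ℕ := g ^ i with ha
    set t : ℕ := g ^ (i' - i) with ht
    have ha1 : 1 ≤ a := Nat.one_le_pow _ _ (by omega)
    have ht2 : 2 ≤ t := le_trans hg (Nat.le_self_pow (by omega) g)
    have hat : a * t = g ^ i' := by
      rw [ha, ht, ← pow_add]
      congr 1
      omega
    -- the key combinatorial consequence
    have heqWord : ∀ n : ℕ, 1 ≤ n → fibWord (a * n) = fibWord (a * t * n) := by
      intro n hn
      rw [hout, hout, ha, hat, autoState_pow g δ q₀ hg i n hn,
        autoState_pow g δ q₀ hg i' n hn, hee]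
    -- now the analytic contradiction
    set β : ℝ := 2 - Φ with hβv
    have hβ0 : 0 < β := by rw [hβv]; linarith [phi_lt]
    have hβ2 : β < 1/2 := by rw [hβv]; linarith [phi_gt]
    set T : ℝ := (t : ℝ) with hT
    have hT2 : (2:ℝ) ≤ T := by rw [hT]; exact_mod_cast ht2
    set c : ℝ := Int.fract (Φ - T * Φ) with hcv
    have hc0 : 0 ≤ c := Int.fract_nonneg _
    have hc1 : c < 1 := Int.fract_lt_one _
    -- choose ε₀
    obtain ⟨ε₀, hε1, hε2, hε3, hε4⟩ :
        ∃ ε₀ : ℝ, 0 < ε₀ ∧ ε₀ < β ∧ β < c + T * ε₀ ∧ c + T * ε₀ < 1 := by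
      have hTpos : (0:ℝ) < T := by linarith
      have hmn1 : min (1 - c) (T * β) ≤ 1 - c := min_le_left _ _
      have hmn2 : min (1 - c) (T * β) ≤ T * β := min_le_right _ _
      have hmn0 : 0 < min (1 - c) (T * β) := lt_min (by linarith) (by nlinarith)
      rcases lt_or_ge c β with hcβ | hcβ
      · refine ⟨(β - c + min (1 - c) (T * β)) / (2 * T), ?_, ?_, ?_, ?_⟩
        · have h2 : (0:ℝ) < 2 * T := by linarith
          have h3 : 0 < β - c + min (1 - c) (T * β) := by linarith
          positivity
        · rw [div_lt_iff₀ (by linarith : (0:ℝ) < 2 * T)]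
          nlinarith
        · have hTe : T * ((β - c + min (1 - c) (T * β)) / (2 * T))
              = (β - c + min (1 - c) (T * β)) / 2 := by
            field_simp
          rw [hTe]
          have hbc1 : β - c < 1 - c := by linarith
          have hbc2 : β - c < T * β := by nlinarith
          have : β - c < min (1 - c) (T * β) := lt_min hbc1 hbc2
          linarith
        · have hTe : T * ((β - c + min (1 - c) (T * β)) / (2 * T))
              = (β - c + min (1 - c) (T * β)) / 2 := by
            field_simp
          rw [hTe]
          linarith
      · refine ⟨min (1 - c) (T * β) / (2 * T), ?_, ?_, ?_, ?_⟩
        · have h2 : (0:ℝ) < 2 * T := by linarith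
          positivity
        · rw [div_lt_iff₀ (by linarith : (0:ℝ) < 2 * T)]
          nlinarith
        · have hTe : T * (min (1 - c) (T * β) / (2 * T)) = min (1 - c) (T * β) / 2 := by
            field_simp
          rw [hTe]
          linarith
        · have hTe : T * (min (1 - c) (T * β) / (2 * T)) = min (1 - c) (T * β) / 2 := by
            field_simp
          rw [hTe]
          linarith
    -- margin
    set dm : ℝ := min (min (ε₀ / 2) ((β - ε₀) / 2))
        (min ((c + T * ε₀ - β) / (2 * T)) ((1 - (c + T * ε₀)) / (2 * T))) with hdmv
    have hTpos : (0:ℝ) < T := by linarith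
    have hdm0 : 0 < dm := by
      apply lt_min (lt_min (by linarith) (by linarith))
        (lt_min (div_pos (by linarith) (by linarith)) (div_pos (by linarith) (by linarith)))
    have hdm1 : dm ≤ ε₀ / 2 := le_trans (min_le_left _ _) (min_le_left _ _)
    have hdm2 : dm ≤ (β - ε₀) / 2 := le_trans (min_le_left _ _) (min_le_right _ _)
    have hdm3 : dm ≤ (c + T * ε₀ - β) / (2 * T) := le_trans (min_le_right _ _) (min_le_left _ _)
    have hdm4 : dm ≤ (1 - (c + T * ε₀)) / (2 * T) := le_trans (min_le_right _ _) (min_le_right _ _)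
    have hTdm3 : T * dm ≤ (c + T * ε₀ - β) / 2 := by
      have e3 : T * ((c + T * ε₀ - β) / (2 * T)) = (c + T * ε₀ - β) / 2 := by
        field_simp
      calc T * dm ≤ T * ((c + T * ε₀ - β) / (2 * T)) :=
            mul_le_mul_of_nonneg_left hdm3 hTpos.le
      _ = (c + T * ε₀ - β) / 2 := e3
    have hTdm4 : T * dm ≤ (1 - (c + T * ε₀)) / 2 := by
      have e4 : T * ((1 - (c + T * ε₀)) / (2 * T)) = (1 - (c + T * ε₀)) / 2 := by
        field_simp
      calc T * dm ≤ T * ((1 - (c + T * ε₀)) / (2 * T)) :=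
            mul_le_mul_of_nonneg_left hdm4 hTpos.le
      _ = (1 - (c + T * ε₀)) / 2 := e4
    -- density gives a suitable n
    have hairr : Irrational ((a:ℝ) * Φ) := nat_mul_phi_irr (by omega)
    obtain ⟨n, hn1, hy1, hy2⟩ := dense_fract ((a:ℝ) * Φ) hairr (β + ε₀ - dm) (2 * dm)
      (by linarith) (by linarith) (by linarith)
    have hyk := Int.fract_add_floor ((n:ℝ) * ((a:ℝ) * Φ))
    set y : ℝ := Int.fract ((n:ℝ) * ((a:ℝ) * Φ)) with hyv
    set k₀ : ℤ := ⌊(n:ℝ) * ((a:ℝ) * Φ)⌋ with hk₀v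
    have hck := Int.fract_add_floor (Φ - T * Φ)
    rw [← hcv] at hck
    set k₂ : ℤ := ⌊Φ - T * Φ⌋ with hk₂v
    -- bounds on ε := y - β
    have hεl : ε₀ - dm < y - β := by linarith
    have hεu : y - β < ε₀ + dm := by linarith
    have hεpos : 0 < y - β := by linarith
    have hεβ : y - β < β := by linarith
    -- value at a*n
    have hA : Int.fract ((((a * n : ℕ) : ℝ) + 1) * Φ) = y - β := by
      have e : (((a * n : ℕ) : ℝ) + 1) * Φ = (y - β) + ((k₀ + 2 : ℤ) : ℝ) := by
        push_cast
        linear_combination (-1 : ℝ) * hyk + hβv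
      rw [e, Int.fract_add_intCast]
      exact Int.fract_eq_self.mpr ⟨by linarith, by linarith⟩
    -- value at a*t*n
    have hTyl := mul_lt_mul_of_pos_left hεl hTpos
    have hTyu := mul_lt_mul_of_pos_left hεu hTpos
    rw [mul_sub] at hTyl
    rw [mul_add] at hTyu
    have hBl : β < c + T * (y - β) := by linarith
    have hBu : c + T * (y - β) < 1 := by linarith
    have hB : Int.fract ((((a * t * n : ℕ) : ℝ) + 1) * Φ) = c + T * (y - β) := by
      have e : (((a * t * n : ℕ) : ℝ) + 1) * Φ
          = (c + T * (y - β)) + (((t : ℤ) * k₀ + 2 * t + k₂ : ℤ) : ℝ) := by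
        push_cast
        rw [← hT]
        linear_combination (-T) * hyk - hck + T * hβv
      rw [e, Int.fract_add_intCast]
      exact Int.fract_eq_self.mpr ⟨by linarith, hBu⟩
    have hfib1 : fibWord (a * n) = 1 := by
      apply (fibWord_eq_one_iff (a * n)).mpr
      rw [hA, ← hβv]
      exact hεβ
    have hfib2 : fibWord (a * t * n) ≠ 1 := by
      intro hcontra
      have h2 := (fibWord_eq_one_iff (a * t * n)).mp hcontra
      rw [hB, ← hβv] at h2
      linarith
    apply hfib2
    rw [← heqWord n hn1]
    exact hfib1
  rcases Nat.lt_trichotomy i i' with hlt | heq | hlt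
  · exact main i i' hlt hee
  · exact hii heq
  · exact main i' i hlt hee.symm
end

section
/- π = Σ_{n≥0} (4/(8n+1) − 2/(8n+4) − 1/(8n+5) − 1/(8n+6))·16^{−n}. -/
open Complex

noncomputable section BBP19aux

private def bX : ℂ := ((Real.sqrt 2 / 2 : ℝ) : ℂ)
private def bZ : ℂ := (1 + I) / 2
private def bW : ℂ := (1 - I) / 2

private lemma bX2 : bX ^ 2 = 1 / 2 := by
  rw [bX, ← ofReal_pow]
  norm_num [div_pow, Real.sq_sqrt]

private lemma bX4 : bX ^ 4 = 1 / 4 := by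
  rw [show (4:ℕ) = 2*2 from rfl, pow_mul, bX2]; norm_num
private lemma bX6 : bX ^ 6 = 1 / 8 := by
  rw [show bX ^ 6 = (bX ^ 2) ^ 3 by ring, bX2]; norm_num

private lemma bI3 : I ^ 3 = -I := by rw [pow_succ, I_sq]; ring
private lemma bI4 : I ^ 4 = 1 := by rw [show (4:ℕ) = 2*2 from rfl, pow_mul, I_sq]; ring
private lemma bI5 : I ^ 5 = I := by rw [pow_succ, bI4]; ring
private lemma bI6 : I ^ 6 = -1 := by rw [pow_succ, bI5, ← I_sq]; ring
private lemma bI7 : I ^ 7 = -I := by rw [pow_succ, bI6]; ring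
private lemma bI8 : I ^ 8 = 1 := by rw [show (8:ℕ) = 4*2 from rfl, pow_mul, bI4, one_pow]

private lemma bX8 : bX ^ 8 = 1 / 16 := by
  rw [show (8:ℕ) = 2*4 from rfl, pow_mul, bX2]; norm_num

private lemma bZ8 : bZ ^ 8 = 1 / 16 := by
  rw [bZ]; field_simp; ring_nf; simp [I_sq, bI3, bI4, bI5, bI6, bI7, bI8]; ring_nf

private lemma bW8 : bW ^ 8 = 1 / 16 := by
  rw [bW]; field_simp; ring_nf; simp [I_sq, bI3, bI4, bI5, bI6, bI7, bI8]; ring_nf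

/-- The weighted numerator function. -/
private def bG (m : ℕ) : ℂ :=
  (-2) * bX ^ m + (-2) * (-bX) ^ m + (2 - 2*I) * bZ ^ m + (2 + 2*I) * bW ^ m

private lemma pow_period {v : ℂ} (hv : v ^ 8 = 1 / 16) (n k : ℕ) :
    v ^ (n * 8 + k) = (1 / 16 : ℂ) ^ n * v ^ k := by
  rw [pow_add, mul_comm n 8, pow_mul, hv]

private lemma negbX8 : (-bX) ^ 8 = 1 / 16 := by
  rw [show ((-bX) ^ 8 : ℂ) = bX ^ 8 by ring, bX8]

private lemma bG_period (n k : ℕ) : bG (n * 8 + k) = (1 / 16 : ℂ) ^ n * bG k := by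
  simp only [bG, pow_period bX8, pow_period bZ8, pow_period bW8, pow_period negbX8]
  ring

private lemma bG_vals : bG 0 = 0 ∧ bG 1 = 4 ∧ bG 2 = 0 ∧ bG 3 = 0 ∧ bG 4 = -2 ∧
    bG 5 = -1 ∧ bG 6 = -1 ∧ bG 7 = 0 := by
  refine ⟨?_, ?_, ?_, ?_, ?_, ?_, ?_, ?_⟩
  all_goals simp only [bG, bZ, bW]
  all_goals field_simp
  all_goals try ring_nf
  all_goals try simp only [I_sq, bI3, bI4, bI5, bI6, bI7, bI8, bX2]
  all_goals try ring_nf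
  all_goals try simp only [bX2, bX4, bX6]
  all_goals try norm_num

private lemma sqrt2_lt_two : Real.sqrt 2 < 2 := by
  nlinarith [Real.sq_sqrt (by norm_num : (0:ℝ) ≤ 2), Real.sqrt_nonneg 2]

private lemma norm_bX : ‖bX‖ < 1 := by
  rw [bX, Complex.norm_real, Real.norm_eq_abs, _root_.abs_of_nonneg (by positivity)]
  linarith [sqrt2_lt_two]

private lemma norm_bZ : ‖bZ‖ < 1 := by
  have h : ‖bZ‖ ^ 2 = 1 / 2 := by
    rw [bZ, Complex.sq_norm]
    simp [Complex.normSq_apply, Complex.div_re, Complex.div_im, Complex.normSq]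
    norm_num
  nlinarith [norm_nonneg bZ]

private lemma norm_bW : ‖bW‖ < 1 := by
  have h : ‖bW‖ ^ 2 = 1 / 2 := by
    rw [bW, Complex.sq_norm]
    simp [Complex.normSq_apply, Complex.div_re, Complex.div_im, Complex.normSq]
    norm_num
  nlinarith [norm_nonneg bW]

private lemma log_bZ : log bZ = ((Real.log (Real.sqrt 2 / 2) : ℝ) : ℂ) +
    ((Real.pi/4 : ℝ) : ℂ) * I := by
  have hs : ((Real.sqrt 2 : ℝ) : ℂ) * ((Real.sqrt 2 : ℝ) : ℂ) = 2 := by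
    rw [← ofReal_mul, Real.mul_self_sqrt (by norm_num)]; norm_num
  have hexp : exp (((Real.log (Real.sqrt 2 / 2) : ℝ) : ℂ) + ((Real.pi/4 : ℝ) : ℂ) * I) = bZ := by
    rw [exp_add, exp_mul_I, ← ofReal_exp, Real.exp_log (by positivity), ← ofReal_cos, ← ofReal_sin,
      Real.cos_pi_div_four, Real.sin_pi_div_four, bZ]
    push_cast
    linear_combination (1/4 + I/4) * hs
  rw [← hexp, Complex.log_exp] <;> simp
  · linarith [Real.pi_pos]
  · linarith [Real.pi_pos]

private lemma log_bW : log bW = ((Real.log (Real.sqrt 2 / 2) : ℝ) : ℂ) -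
    ((Real.pi/4 : ℝ) : ℂ) * I := by
  have hs : ((Real.sqrt 2 : ℝ) : ℂ) * ((Real.sqrt 2 : ℝ) : ℂ) = 2 := by
    rw [← ofReal_mul, Real.mul_self_sqrt (by norm_num)]; norm_num
  have hexp : exp (((Real.log (Real.sqrt 2 / 2) : ℝ) : ℂ) + ((-(Real.pi/4) : ℝ) : ℂ) * I) = bW := by
    rw [exp_add, exp_mul_I, ← ofReal_exp, Real.exp_log (by positivity), ← ofReal_cos, ← ofReal_sin,
      Real.cos_neg, Real.sin_neg, Real.cos_pi_div_four, Real.sin_pi_div_four, bW]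
    push_cast
    linear_combination (1/4 - I/4) * hs
  rw [← hexp, Complex.log_exp]
  · push_cast; ring
  · simp; linarith [Real.pi_pos]
  · simp; linarith [Real.pi_pos]

private lemma hasSum_bG : HasSum (fun m : ℕ => bG m / m) ((Real.pi : ℝ) : ℂ) := by
  have hnx : ‖-bX‖ < 1 := by rw [norm_neg]; exact norm_bX
  have H := (((hasSum_taylorSeries_neg_log norm_bX).mul_left (-2)).add
      ((hasSum_taylorSeries_neg_log hnx).mul_left (-2))).add
      (((hasSum_taylorSeries_neg_log norm_bZ).mul_left (2 - 2*I)).add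
      ((hasSum_taylorSeries_neg_log norm_bW).mul_left (2 + 2*I)))
  have hfun : (fun m : ℕ => (-2) * (bX ^ m / m) + (-2) * ((-bX) ^ m / m) +
      ((2 - 2*I) * (bZ ^ m / m) + (2 + 2*I) * (bW ^ m / m))) = fun m : ℕ => bG m / m := by
    funext m; rw [bG]; ring
  rw [hfun] at H
  convert H using 1
  · rfl
  have h1z : (1 : ℂ) - bZ = bW := by rw [bZ, bW]; ring
  have h1w : (1 : ℂ) - bW = bZ := by rw [bZ, bW]; ring
  have h1x : (1 : ℂ) - bX = ((1 - Real.sqrt 2 / 2 : ℝ) : ℂ) := by rw [bX]; push_cast; ring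
  have h2x : (1 : ℂ) - -bX = ((1 + Real.sqrt 2 / 2 : ℝ) : ℂ) := by rw [bX]; push_cast; ring
  rw [h1z, h1w, h1x, h2x, log_bZ, log_bW, ← Complex.ofReal_log (by norm_num; linarith [sqrt2_lt_two]),
    ← Complex.ofReal_log (by positivity)]
  have hA : Real.log (1 - Real.sqrt 2 / 2) + Real.log (1 + Real.sqrt 2 / 2) = -Real.log 2 := by
    rw [← Real.log_mul (by norm_num; nlinarith [sqrt2_lt_two]) (by positivity)]
    have : (1 - Real.sqrt 2 / 2) * (1 + Real.sqrt 2 / 2) = 1 / 2 := by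
      nlinarith [Real.sq_sqrt (by norm_num : (0:ℝ) ≤ 2)]
    rw [this, one_div, Real.log_inv]
  have hL : Real.log (Real.sqrt 2 / 2) = -(Real.log 2) / 2 := by
    rw [Real.log_div (by positivity) (by norm_num), Real.log_sqrt (by norm_num)]
    ring
  have hA' : ((Real.log (1 - Real.sqrt 2 / 2) : ℝ) : ℂ) + ((Real.log (1 + Real.sqrt 2 / 2) : ℝ) : ℂ)
      = -((Real.log 2 : ℝ) : ℂ) := by exact_mod_cast congrArg (Complex.ofReal) hA
  have hL' : ((Real.log (Real.sqrt 2 / 2) : ℝ) : ℂ) = -((Real.log 2 : ℝ) : ℂ) / 2 := by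
    exact_mod_cast congrArg (Complex.ofReal) hL
  rw [hL']
  push_cast
  linear_combination (-2:ℂ) * hA' + ((Real.pi : ℝ) : ℂ) * I_sq

end BBP19aux

set_option maxHeartbeats 1000000 in
/-- The Bailey–Borwein–Plouffe formula:
`π = Σ_{n≥0} (4/(8n+1) − 2/(8n+4) − 1/(8n+5) − 1/(8n+6))·16^{−n}`. -/
theorem stmt_19 :
    Real.pi = ∑' n : ℕ,
      (4 / (8 * (n : ℝ) + 1) - 2 / (8 * (n : ℝ) + 4) - 1 / (8 * (n : ℝ) + 5) -
        1 / (8 * (n : ℝ) + 6)) * ((16 : ℝ) ^ n)⁻¹ := by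
  obtain ⟨g0, g1, g2, g3, g4, g5, g6, g7⟩ := bG_vals
  have H := (Nat.divModEquiv 8).symm.hasSum_iff.mpr hasSum_bG
  dsimp [Function.comp_def] at H
  have key : HasSum (fun n : ℕ =>
      (((4 / (8 * (n : ℝ) + 1) - 2 / (8 * (n : ℝ) + 4) - 1 / (8 * (n : ℝ) + 5) -
        1 / (8 * (n : ℝ) + 6)) * ((16 : ℝ) ^ n)⁻¹ : ℝ) : ℂ)) ((Real.pi : ℝ) : ℂ) := by
    refine H.prod_fiberwise fun n => ?_
    convert hasSum_fintype (fun r : Fin 8 => bG (n * 8 + (r : ℕ)) / ((n * 8 + (r : ℕ) : ℕ) : ℂ))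
      using 1
    · funext c; rfl
    rw [Fin.sum_univ_eight]
    simp only [Fin.val_zero, Fin.val_one, Fin.val_two,
      show ((3:Fin 8):ℕ) = 3 from rfl, show ((4:Fin 8):ℕ) = 4 from rfl,
      show ((5:Fin 8):ℕ) = 5 from rfl, show ((6:Fin 8):ℕ) = 6 from rfl,
      show ((7:Fin 8):ℕ) = 7 from rfl]
    rw [bG_period n 0, bG_period n 1, bG_period n 2, bG_period n 3, bG_period n 4,
      bG_period n 5, bG_period n 6, bG_period n 7, g0, g1, g2, g3, g4, g5, g6, g7]
    simp only [mul_zero, zero_div, add_zero, zero_add]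
    have hc : ∀ k : ℕ, k ≠ 0 → ((n * 8 + k : ℕ) : ℂ) ≠ 0 := fun k hk =>
      Nat.cast_ne_zero.mpr (by omega)
    have d1 := hc 1 one_ne_zero
    have d4 := hc 4 (by norm_num)
    have d5 := hc 5 (by norm_num)
    have d6 := hc 6 (by norm_num)
    have h16 : ((16 : ℂ) ^ n) ≠ 0 := pow_ne_zero _ (by norm_num)
    have hpow : ((1:ℂ)/16) ^ n = ((16 : ℂ) ^ n)⁻¹ := by rw [one_div, inv_pow]
    push_cast at d1 d4 d5 d6 ⊢
    have e1 : ((1:ℂ) + (n:ℂ) * 8) ≠ 0 := by rw [add_comm]; exact d1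
    have e4 : ((4:ℂ) + (n:ℂ) * 8) ≠ 0 := by rw [add_comm]; exact d4
    have e5 : ((5:ℂ) + (n:ℂ) * 8) ≠ 0 := by rw [add_comm]; exact d5
    have e6 : ((6:ℂ) + (n:ℂ) * 8) ≠ 0 := by rw [add_comm]; exact d6
    rw [hpow]
    generalize ((16:ℂ) ^ n)⁻¹ = q
    have d1' : 8 * (n:ℂ) + 1 ≠ 0 := by rwa [mul_comm]
    have d4' : 8 * (n:ℂ) + 4 ≠ 0 := by rwa [mul_comm]
    have d5' : 8 * (n:ℂ) + 5 ≠ 0 := by rwa [mul_comm]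
    have d6' : 8 * (n:ℂ) + 6 ≠ 0 := by rwa [mul_comm]
    field_simp
    ring
  exact (Complex.hasSum_ofReal.mp key).tsum_eq.symm
end
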